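/- arXiv:0802.3963 — 3 statements merged into one kernel-verified Lean document; each statement's English description precedes it below -/
import Mathlib

section
/- Let ρ be a real symmetric positive definite n×n matrix, let Φ₀ be a Hermitian N×N complex matrix with smallest eigenvalue γ, let λ ∈ ℝ, and let η ∈ ℝⁿ satisfy ⟨ρη, η⟩ < γ − λ. Then for every ξ ∈ ℝⁿ, the N×N complex matrix (Σ_{j,k} ρ_{jk}(ξ_j + iη_j)(ξ_k + iη_k))·E + Φ₀ − λ·E is invertible. -/
open Filter Topology

/-- The quadratic form `⟨M φ, φ⟩ = Σ_i conj(φ i) * (M φ)_i` (real part) of a matrix `M`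
at a vector `φ` of the complex Euclidean space. -/
noncomputable def qform (N : ℕ) (M : Matrix (Fin N) (Fin N) ℂ)
    (φ : EuclideanSpace ℂ (Fin N)) : ℝ :=
  (∑ i, (starRingEnd ℂ) (φ i) * M.mulVec (fun j => φ j) i).re

/-- for a real symmetric positive definite `ρ`, a Hermitian `Φ₀` with
smallest eigenvalue `γ`, `λ ∈ ℝ` and `η ∈ ℝⁿ` with `⟨ρη, η⟩ < γ - λ`, the matrix
`(Σ_{j,k} ρ_{jk} (ξ_j + iη_j)(ξ_k + iη_k)) E + Φ₀ - λ E` is invertible for all `ξ`. -/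
theorem weighted_schroedinger_symbol_invertible (n N : ℕ)
    (ρ : Matrix (Fin n) (Fin n) ℝ) (hρ : ρ.PosDef)
    (Φ₀ : Matrix (Fin N) (Fin N) ℂ) (hΦ : Φ₀.IsHermitian)
    (γ : ℝ)
    (hγ : IsLeast {r : ℝ | ∃ φ : EuclideanSpace ℂ (Fin N), ‖φ‖ = 1 ∧ qform N Φ₀ φ = r} γ)
    (lam : ℝ) (η : Fin n → ℝ)
    (hη : ∑ j, ∑ k, ρ j k * η j * η k < γ - lam) :
    ∀ ξ : Fin n → ℝ,
      IsUnit ((∑ j, ∑ k, (ρ j k : ℂ) * (ξ j + Complex.I * η j) * (ξ k + Complex.I * η k)) •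
        (1 : Matrix (Fin N) (Fin N) ℂ) + Φ₀ - (lam : ℂ) • 1) := by
  intro ξ
  set c : ℂ := ∑ j, ∑ k, (ρ j k : ℂ) * (ξ j + Complex.I * η j) * (ξ k + Complex.I * η k) with hc
  -- real part of c
  have hcre : c.re = (∑ j, ∑ k, ρ j k * ξ j * ξ k) - ∑ j, ∑ k, ρ j k * η j * η k := by
    rw [hc, Complex.re_sum, ← Finset.sum_sub_distrib]
    refine Finset.sum_congr rfl fun j _ => ?_
    rw [Complex.re_sum, ← Finset.sum_sub_distrib]
    refine Finset.sum_congr rfl fun k _ => ?_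
    simp [Complex.mul_re, Complex.mul_im]
  -- positivity of Q(ξ)
  have hQξ : 0 ≤ ∑ j, ∑ k, ρ j k * ξ j * ξ k := by
    have h0 := hρ.posSemidef.dotProduct_mulVec_nonneg ξ
    simp only [RCLike.re_to_real, dotProduct, Matrix.mulVec, Pi.star_apply,
      star_trivial] at h0
    calc (0:ℝ) ≤ ∑ j, ξ j * ∑ k, ρ j k * ξ k := h0
      _ = ∑ j, ∑ k, ρ j k * ξ j * ξ k := by
          simp only [Finset.mul_sum]
          exact Finset.sum_congr rfl fun j _ => Finset.sum_congr rfl fun k _ => by ring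
  have hcre' : lam - γ < c.re := by
    rw [hcre]; linarith
  -- reduce to determinant
  rw [Matrix.isUnit_iff_isUnit_det, isUnit_iff_ne_zero]
  intro hdet
  obtain ⟨v, hv0, hveq⟩ := Matrix.exists_mulVec_eq_zero_iff.mpr hdet
  -- expand mulVec
  have hmv : (c • (1 : Matrix (Fin N) (Fin N) ℂ) + Φ₀ - (lam : ℂ) • 1).mulVec v
      = c • v + Φ₀.mulVec v - (lam : ℂ) • v := by
    rw [Matrix.sub_mulVec, Matrix.add_mulVec, Matrix.smul_mulVec,
      Matrix.smul_mulVec, Matrix.one_mulVec]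
  rw [hmv] at hveq
  -- the squared norm of v
  set t : ℝ := ∑ i, Complex.normSq (v i) with ht
  have htpos : 0 < t := by
    have : ∃ i, v i ≠ 0 := by
      by_contra h
      push_neg at h
      exact hv0 (funext h)
    obtain ⟨i, hi⟩ := this
    exact Finset.sum_pos' (fun i _ => Complex.normSq_nonneg _)
      ⟨i, Finset.mem_univ i, Complex.normSq_pos.mpr hi⟩
  have hsum : ∑ i, (starRingEnd ℂ) (v i) * v i = (t : ℂ) := by
    rw [ht]
    push_cast
    exact Finset.sum_congr rfl fun i _ => by rw [mul_comm, Complex.mul_conj]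
  -- pairing with v is zero
  have hS : (c - (lam : ℂ)) * (t : ℂ) + ∑ i, (starRingEnd ℂ) (v i) * Φ₀.mulVec v i = 0 := by
    have h1 : ∑ i, (starRingEnd ℂ) (v i) * (c • v + Φ₀.mulVec v - (lam : ℂ) • v) i = 0 := by
      rw [hveq]; simp
    rw [← h1, ← hsum]
    simp only [Pi.add_apply, Pi.sub_apply, Pi.smul_apply, smul_eq_mul]
    rw [Finset.mul_sum, ← Finset.sum_add_distrib]
    exact Finset.sum_congr rfl fun i _ => by ring
  -- normalized vector
  set s : ℝ := (Real.sqrt t)⁻¹ with hs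
  have hst : Real.sqrt t ≠ 0 := ne_of_gt (Real.sqrt_pos.mpr htpos)
  set φ : EuclideanSpace ℂ (Fin N) := WithLp.toLp 2 (fun i => (s : ℂ) * v i) with hφ
  have hφnorm : ‖φ‖ = 1 := by
    rw [EuclideanSpace.norm_eq]
    have : ∀ i, ‖φ i‖ ^ 2 = s ^ 2 * Complex.normSq (v i) := by
      intro i
      rw [hφ, PiLp.toLp_apply]
      rw [norm_mul, mul_pow, Complex.norm_real, Real.norm_eq_abs, _root_.sq_abs,
        Complex.sq_norm]
    rw [Finset.sum_congr rfl fun i _ => this i, ← Finset.mul_sum, ← ht, hs,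
      inv_pow, sq (Real.sqrt t), Real.mul_self_sqrt htpos.le,
      inv_mul_cancel₀ (ne_of_gt htpos), Real.sqrt_one]
  have hqf : qform N Φ₀ φ = s ^ 2 * (∑ i, (starRingEnd ℂ) (v i) * Φ₀.mulVec v i).re := by
    unfold qform
    have hmv2 : Φ₀.mulVec (fun j => φ j) = (s : ℂ) • Φ₀.mulVec v := by
      have : (fun j => φ j) = (s : ℂ) • v := by funext j; simp [hφ]
      rw [this, Matrix.mulVec_smul]
    rw [hmv2]
    rw [← Complex.re_ofReal_mul]
    congr 1
    rw [Finset.mul_sum]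
    refine Finset.sum_congr rfl fun i _ => ?_
    simp only [hφ, PiLp.toLp_apply, map_mul, Pi.smul_apply, smul_eq_mul, Complex.conj_ofReal]
    push_cast
    ring
  have hγle : γ ≤ qform N Φ₀ φ := hγ.2 ⟨φ, hφnorm, rfl⟩
  -- take real part of hS
  have hre : (c.re - lam) * t + (∑ i, (starRingEnd ℂ) (v i) * Φ₀.mulVec v i).re = 0 := by
    have := congrArg Complex.re hS
    simpa [Complex.add_re, Complex.mul_re, Complex.sub_re, Complex.ofReal_re,
      Complex.ofReal_im] using this
  have hs2 : s ^ 2 = t⁻¹ := by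
    rw [hs, inv_pow, sq (Real.sqrt t), Real.mul_self_sqrt htpos.le]
  have hR : (∑ i, (starRingEnd ℂ) (v i) * Φ₀.mulVec v i).re = t * qform N Φ₀ φ := by
    rw [hqf, hs2]
    field_simp
  rw [hR] at hre
  nlinarith [mul_pos htpos (show (0:ℝ) < c.re - lam + γ by linarith [hγle])]
end

section
/- Let ℍ(ℂ) denote the algebra of complex quaternions, and let q = q₁e₁ + q₂e₂ + q₃e₃ and φ = φ₁e₁ + φ₂e₂ + φ₃e₃ be purely vectorial complex quaternions. The ℂ-linear map T : ℍ(ℂ) → ℍ(ℂ) defined by T(u) = q·u + u·φ is bijective if and only if q₁² + q₂² + q₃² ≠ φ₁² + φ₂² + φ₃². -/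
/-- for purely vectorial complex quaternions `q = q₁e₁ + q₂e₂ + q₃e₃` and
`φ = φ₁e₁ + φ₂e₂ + φ₃e₃`, the (ℂ-linear) map `u ↦ qu + uφ` on the complex quaternions is
bijective if and only if `q₁² + q₂² + q₃² ≠ φ₁² + φ₂² + φ₃²`. -/
theorem quaternionic_symbol_bijective_iff (q φ : Quaternion ℂ)
    (hq : q.re = 0) (hφ : φ.re = 0) :
    Function.Bijective (fun u : Quaternion ℂ => q * u + u * φ) ↔
      q.imI ^ 2 + q.imJ ^ 2 + q.imK ^ 2 ≠ φ.imI ^ 2 + φ.imJ ^ 2 + φ.imK ^ 2 := by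
  set Nq : ℂ := q.imI ^ 2 + q.imJ ^ 2 + q.imK ^ 2 with hNq
  set Nφ : ℂ := φ.imI ^ 2 + φ.imJ ^ 2 + φ.imK ^ 2 with hNφ
  set c : ℂ := Nφ - Nq with hcdef
  have hqq : q * q = ((-Nq : ℂ) : Quaternion ℂ) := by
    ext <;>
      simp [hNq, hq, Quaternion.re_coe, Quaternion.imI_coe, Quaternion.imJ_coe,
        Quaternion.imK_coe, pow_two] <;> ring
  have hφφ : φ * φ = ((-Nφ : ℂ) : Quaternion ℂ) := by
    ext <;>
      simp [hNφ, hφ, Quaternion.re_coe, Quaternion.imI_coe, Quaternion.imJ_coe,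
        Quaternion.imK_coe, pow_two] <;> ring
  have key : ∀ u : Quaternion ℂ,
      q * (q * u - u * φ) + (q * u - u * φ) * φ = (c : Quaternion ℂ) * u := by
    intro u
    have h : q * (q * u - u * φ) + (q * u - u * φ) * φ
        = q * q * u - u * (φ * φ) := by
      simp only [mul_sub, sub_mul, mul_add, add_mul, mul_assoc]; abel
    rw [h, hqq, hφφ, ← Quaternion.coe_commutes, ← sub_mul, hcdef]
    congr 1
    norm_cast
    ring_nf
  have key2 : ∀ u : Quaternion ℂ,
      q * (q * u + u * φ) - (q * u + u * φ) * φ = (c : Quaternion ℂ) * u := by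
    intro u
    have h : q * (q * u + u * φ) - (q * u + u * φ) * φ
        = q * q * u - u * (φ * φ) := by
      simp only [mul_sub, sub_mul, mul_add, add_mul, mul_assoc]; abel
    rw [h, hqq, hφφ, ← Quaternion.coe_commutes, ← sub_mul, hcdef]
    congr 1
    norm_cast
    ring_nf
  constructor
  · intro hbij hN
    have hc : c = 0 := by rw [hcdef, hN, sub_self]
    by_cases hS : ∀ v : Quaternion ℂ, q * v - v * φ = 0
    · -- q = φ and q is central, hence q = φ = 0 and T = 0, not injective
      have h1 : q = φ := by have := hS 1; simpa [sub_eq_zero] using this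
      have hcomm : ∀ v : Quaternion ℂ, q * v = v * q := by
        intro v; have := hS v; rw [← h1] at this; exact sub_eq_zero.mp this
      have hi := hcomm ((Quaternion.equivTuple ℂ).symm ![0, 1, 0, 0])
      have hj := hcomm ((Quaternion.equivTuple ℂ).symm ![0, 0, 1, 0])
      rw [Quaternion.ext_iff] at hi hj
      simp only [Quaternion.re_mul, Quaternion.imI_mul,
        Quaternion.imJ_mul, Quaternion.imK_mul] at hi hj
      simp at hi hj
      have hI : q.imI = 0 := by linear_combination hj.2 / 2
      have hJ : q.imJ = 0 := by linear_combination - hi.2 / 2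
      have hK : q.imK = 0 := by linear_combination hi.1 / 2
      have hq0 : q = 0 := by ext <;> simp [hq, hI, hJ, hK, Quaternion.re_zero, Quaternion.imI_zero, Quaternion.imJ_zero, Quaternion.imK_zero]
      have hφ0 : φ = 0 := h1 ▸ hq0
      have : (1 : Quaternion ℂ) = 0 := hbij.1 (by simp [hq0, hφ0])
      exact one_ne_zero this
    · push_neg at hS
      obtain ⟨v, hv⟩ := hS
      have h0 : (fun u : Quaternion ℂ => q * u + u * φ) (q * v - v * φ)
          = (fun u : Quaternion ℂ => q * u + u * φ) 0 := by
        simp only [mul_zero, zero_mul, add_zero]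
        rw [key, hc]
        simp
      exact hv (by simpa using hbij.1 h0)
  · intro hN
    have hc : c ≠ 0 := sub_ne_zero.mpr (Ne.symm hN)
    refine Function.bijective_iff_has_inverse.mpr
      ⟨fun u => ((c⁻¹ : ℂ) : Quaternion ℂ) * (q * u - u * φ), fun u => ?_, fun u => ?_⟩
    · simp only []
      rw [key2 u, ← mul_assoc, ← Quaternion.coe_mul, inv_mul_cancel₀ hc,
        Quaternion.coe_one, one_mul]
    · simp only []
      have h : q * (((c⁻¹ : ℂ) : Quaternion ℂ) * (q * u - u * φ))
            + (((c⁻¹ : ℂ) : Quaternion ℂ) * (q * u - u * φ)) * φ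
          = ((c⁻¹ : ℂ) : Quaternion ℂ) *
            (q * (q * u - u * φ) + (q * u - u * φ) * φ) := by
        rw [mul_add]
        congr 1
        · rw [← mul_assoc, ← Quaternion.coe_commutes, mul_assoc]
        · rw [mul_assoc]
      rw [h, key u, ← mul_assoc, ← Quaternion.coe_mul, inv_mul_cancel₀ hc,
        Quaternion.coe_one, one_mul]
end

section
/- Let γ₀, γ₁, γ₂, γ₃ be 4×4 complex matrices satisfying γ_jγ_k + γ_kγ_j = 2δ_{jk}E for all j, k ∈ {0,1,2,3}, with E the 4×4 identity. Let φ = (φ^{jk}) be a real symmetric positive definite 3×3 matrix and ρ := φ·φ, let c > 0, h > 0, m > 0, and let μ ∈ ℝ with |μ| < mc². Let ξ, η ∈ ℝ³ and t ∈ [−1, 1] be such that c²h²t²⟨ρη, η⟩ < m²c⁴ − μ². Then the 4×4 matrix c·h·Σ_{k=1}^{3}(Σ_{j=1}^{3} φ^{jk}(ξ_j + i t η_j))γ_k + mc²γ₀ − μE is invertible. -/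
private lemma clifford_sq (γ : Fin 4 → Matrix (Fin 4) (Fin 4) ℂ)
    (hγ : ∀ j k, γ j * γ k + γ k * γ j =
      if j = k then (2 : ℂ) • (1 : Matrix (Fin 4) (Fin 4) ℂ) else 0)
    (a : Fin 4 → ℂ) :
    (∑ j, a j • γ j) * (∑ j, a j • γ j) = (∑ j, a j ^ 2) • 1 := by
  have expand : (∑ j, a j • γ j) * (∑ j, a j • γ j)
      = ∑ j, ∑ k, (a j * a k) • (γ j * γ k) := by
    rw [Finset.sum_mul]
    refine Finset.sum_congr rfl fun j _ => ?_
    rw [Finset.mul_sum]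
    refine Finset.sum_congr rfl fun k _ => ?_
    simp only [smul_mul_assoc, mul_smul_comm, smul_smul]
    rw [mul_comm]
  have expand' : (∑ j, a j • γ j) * (∑ j, a j • γ j)
      = ∑ j, ∑ k, (a j * a k) • (γ k * γ j) := by
    rw [expand, Finset.sum_comm]
    refine Finset.sum_congr rfl fun j _ => Finset.sum_congr rfl fun k _ => ?_
    rw [mul_comm]
  have key : (2 : ℂ) • ((∑ j, a j • γ j) * (∑ j, a j • γ j))
      = (2 : ℂ) • ((∑ j, a j ^ 2) • (1 : Matrix (Fin 4) (Fin 4) ℂ)) := by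
    have h1 : (2 : ℂ) • ((∑ j, a j • γ j) * (∑ j, a j • γ j))
        = ∑ j, ∑ k, (a j * a k) • (γ j * γ k + γ k * γ j) := by
      rw [two_smul]
      nth_rewrite 1 [expand]
      nth_rewrite 1 [expand']
      rw [← Finset.sum_add_distrib]
      refine Finset.sum_congr rfl fun j _ => ?_
      rw [← Finset.sum_add_distrib]
      exact Finset.sum_congr rfl fun k _ => by rw [smul_add]
    rw [h1]
    have h2 : ∀ j k : Fin 4, (a j * a k) • (γ j * γ k + γ k * γ j)
        = if j = k then (a j * a k) • ((2:ℂ) • (1 : Matrix (Fin 4) (Fin 4) ℂ)) else 0 := by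
      intro j k; rw [hγ j k]; split <;> simp
    simp_rw [h2, Finset.sum_ite_eq, Finset.mem_univ, if_true, smul_smul]
    rw [← Finset.sum_smul]
    congr 1
    rw [Finset.mul_sum]
    exact Finset.sum_congr rfl fun j _ => by ring
  exact smul_right_injective _ (two_ne_zero) key

/-- pointwise invertibility in the proof of the paper's Theorem 6.3: for
Dirac matrices `γ₀,…,γ₃`, a real symmetric positive definite 3×3 matrix `φ` with
`ρ := φ·φ`, `c, h, m > 0`, a real `μ` with `|μ| < mc²`, and `ξ, η ∈ ℝ³`, `t ∈ [-1,1]`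
with `c²h²t² ⟨ρη, η⟩ < m²c⁴ - μ²`, the matrix
`ch Σ_k (Σ_j φ^{jk}(ξ_j + itη_j)) γ_k + mc² γ₀ - μE` is invertible. -/
theorem weighted_dirac_symbol_invertible
    (γ : Fin 4 → Matrix (Fin 4) (Fin 4) ℂ)
    (hγ : ∀ j k, γ j * γ k + γ k * γ j =
      if j = k then (2 : ℂ) • (1 : Matrix (Fin 4) (Fin 4) ℂ) else 0)
    (φ : Matrix (Fin 3) (Fin 3) ℝ) (hφsymm : φ.IsSymm) (hφpos : φ.PosDef)
    (c h m : ℝ) (hc : 0 < c) (hh : 0 < h) (hm : 0 < m)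
    (μ : ℝ) (hμ : |μ| < m * c ^ 2)
    (ξ η : Fin 3 → ℝ) (t : ℝ) (ht : t ∈ Set.Icc (-1 : ℝ) 1)
    (hquad : c ^ 2 * h ^ 2 * t ^ 2 * (∑ j, ∑ k, (φ * φ) j k * η j * η k) <
      m ^ 2 * c ^ 4 - μ ^ 2) :
    IsUnit
      (((c * h : ℝ) : ℂ) •
          ∑ k : Fin 3, (∑ j : Fin 3, (φ j k : ℂ) * (ξ j + Complex.I * t * η j)) • γ k.succ +
        ((m * c ^ 2 : ℝ) : ℂ) • γ 0 - ((μ : ℝ) : ℂ) • (1 : Matrix (Fin 4) (Fin 4) ℂ)) := by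
  classical
  set b : Fin 3 → ℂ := fun k => ∑ j, (φ j k : ℂ) * (ξ j + Complex.I * t * η j) with hb
  set a : Fin 4 → ℂ := Fin.cons ((m * c ^ 2 : ℝ) : ℂ) (fun k => ((c * h : ℝ) : ℂ) * b k) with ha
  set S : Matrix (Fin 4) (Fin 4) ℂ := ∑ j, a j • γ j with hSdef
  set u : Fin 3 → ℝ := fun k => ∑ j, φ j k * ξ j with hu
  set v : Fin 3 → ℝ := fun k => ∑ j, φ j k * η j with hv
  have hsym : ∀ i j, φ i j = φ j i := fun i j => by
    have h0 := congrFun (congrFun hφsymm j) i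
    rw [Matrix.transpose_apply] at h0
    exact h0
  -- real and imaginary parts of b
  have hbre : ∀ k, (b k).re = u k := by
    intro k
    simp [hb, hu, Complex.re_sum, mul_add]
  have hbim : ∀ k, (b k).im = t * v k := by
    intro k
    simp only [hb, hv, Complex.im_sum, Complex.mul_im, Complex.ofReal_re,
      Complex.ofReal_im, Complex.add_im, Complex.add_re, Complex.mul_re,
      Complex.I_re, Complex.I_im, Finset.mul_sum]
    refine Finset.sum_congr rfl fun j _ => ?_
    ring
  -- the matrix equals S - μ•1
  have hA : (((c * h : ℝ) : ℂ) •
          ∑ k : Fin 3, (∑ j : Fin 3, (φ j k : ℂ) * (ξ j + Complex.I * t * η j)) • γ k.succ +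
        ((m * c ^ 2 : ℝ) : ℂ) • γ 0 - ((μ : ℝ) : ℂ) • (1 : Matrix (Fin 4) (Fin 4) ℂ))
      = S - ((μ : ℝ) : ℂ) • 1 := by
    rw [hSdef]
    conv_rhs => rw [Fin.sum_univ_succ]
    have h3 : ∑ i : Fin 3, a i.succ • γ i.succ
        = ((c * h : ℝ) : ℂ) • ∑ k : Fin 3, b k • γ k.succ := by
      rw [Finset.smul_sum]
      refine Finset.sum_congr rfl fun k _ => ?_
      rw [smul_smul]
      rfl
    rw [h3, ha, Fin.cons_zero]
    abel
  set s : ℂ := (∑ j, a j ^ 2) - ((μ : ℝ) : ℂ) ^ 2 with hs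
  -- the product identity
  have hprod : (S - ((μ : ℝ) : ℂ) • 1) * (S + ((μ : ℝ) : ℂ) • 1) = s • 1 := by
    have hsq := clifford_sq γ hγ a
    rw [hs, sub_mul, mul_add, mul_add, ← hSdef] at *
    rw [hsq]
    simp only [smul_mul_assoc, mul_smul_comm, one_mul, mul_one, smul_smul]
    rw [sub_smul]
    rw [pow_two]
    abel_nf
  -- positivity of the real part of s
  have hρ : (∑ j, ∑ k, (φ * φ) j k * η j * η k) = ∑ l, v l ^ 2 := by
    have step1 : ∀ j k : Fin 3, (φ * φ) j k * η j * η k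
        = ∑ l, (φ j l * η j) * (φ l k * η k) := by
      intro j k
      rw [Matrix.mul_apply, Finset.sum_mul, Finset.sum_mul]
      exact Finset.sum_congr rfl fun l _ => by ring
    calc ∑ j, ∑ k, (φ * φ) j k * η j * η k
        = ∑ j, ∑ k, ∑ l, (φ j l * η j) * (φ l k * η k) :=
          Finset.sum_congr rfl fun j _ => Finset.sum_congr rfl fun k _ => step1 j k
      _ = ∑ j : Fin 3, ∑ l : Fin 3, ∑ k : Fin 3, (φ j l * η j) * (φ l k * η k) :=
          Finset.sum_congr rfl fun j _ => Finset.sum_comm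
      _ = ∑ l : Fin 3, ∑ j : Fin 3, ∑ k : Fin 3, (φ j l * η j) * (φ l k * η k) :=
          Finset.sum_comm
      _ = ∑ l, (∑ j, φ j l * η j) * (∑ k, φ l k * η k) := by
          refine Finset.sum_congr rfl fun l _ => ?_
          rw [Finset.sum_mul_sum]
      _ = ∑ l, v l ^ 2 := by
          refine Finset.sum_congr rfl fun l _ => ?_
          rw [pow_two, hv]
          congr 1
          exact Finset.sum_congr rfl fun k _ => by rw [hsym l k]
  have hsre : s.re = m ^ 2 * c ^ 4 - μ ^ 2
      + (c * h) ^ 2 * ∑ k, ((u k) ^ 2 - (t * v k) ^ 2) := by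
    have hsum : (∑ j, a j ^ 2)
        = ((m * c ^ 2 : ℝ) : ℂ) ^ 2 + ∑ k : Fin 3, (((c * h : ℝ) : ℂ) * b k) ^ 2 := by
      rw [Fin.sum_univ_succ]
      rfl
    rw [hs, Complex.sub_re, hsum, Complex.add_re, Complex.re_sum]
    have h0 : (((m * c ^ 2 : ℝ) : ℂ) ^ 2).re = m ^ 2 * c ^ 4 := by
      rw [← Complex.ofReal_pow, Complex.ofReal_re]
      ring
    have hk : ∀ k : Fin 3, ((((c * h : ℝ) : ℂ) * b k) ^ 2).re
        = (c * h) ^ 2 * ((u k) ^ 2 - (t * v k) ^ 2) := by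
      intro k
      rw [mul_pow, ← Complex.ofReal_pow, pow_two (b k), Complex.mul_re,
        Complex.ofReal_re, Complex.ofReal_im, Complex.mul_re, hbre, hbim]
      ring
    have hμ2 : ((((μ : ℝ)) : ℂ) ^ 2).re = μ ^ 2 := by
      rw [← Complex.ofReal_pow, Complex.ofReal_re]
    rw [h0, hμ2]
    simp_rw [hk]
    rw [← Finset.mul_sum]
    ring
  have hsne : s ≠ 0 := by
    have h1 : 0 < s.re := by
      rw [hsre]
      have h2 : ∑ k, ((u k) ^ 2 - (t * v k) ^ 2) ≥ ∑ k, (-(t * v k) ^ 2) := by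
        refine Finset.sum_le_sum fun k _ => ?_
        nlinarith [sq_nonneg (u k)]
      have h3 : (c * h) ^ 2 * ∑ k, ((u k) ^ 2 - (t * v k) ^ 2)
          ≥ (c * h) ^ 2 * ∑ k, (-(t * v k) ^ 2) := by
        exact mul_le_mul_of_nonneg_left h2 (sq_nonneg _)
      have h4 : (c * h) ^ 2 * ∑ k, (-(t * v k) ^ 2)
          = -(c ^ 2 * h ^ 2 * t ^ 2 * ∑ l, v l ^ 2) := by
        have e1 : (∑ k : Fin 3, (-(t * v k) ^ 2)) = -∑ k : Fin 3, (t * v k) ^ 2 := by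
          simp
        rw [e1, mul_neg, neg_inj, Finset.mul_sum, Finset.mul_sum]
        exact Finset.sum_congr rfl fun k _ => by ring
      rw [hρ] at hquad
      nlinarith [hquad, h3, h4]
    intro h0
    rw [h0] at h1
    simp at h1
  -- conclude
  rw [hA]
  have hinv : (S - ((μ : ℝ) : ℂ) • 1) * (s⁻¹ • (S + ((μ : ℝ) : ℂ) • 1)) = 1 := by
    rw [mul_smul_comm, hprod, smul_smul, inv_mul_cancel₀ hsne, one_smul]
  exact (Matrix.isUnit_iff_isUnit_det _).mpr (Matrix.isUnit_det_of_right_inverse hinv)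
end
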